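/- For every a > 0 and all real m × n matrices X and Y (m ≤ n), the function P_a satisfies the triangle inequality: P_a(X + Y) ≤ P_a(X) + P_a(Y). -/

import Mathlib

open Matrix Filter

/-- The singular values of a real `m × n` matrix: square roots of the eigenvalues of `X * Xᵀ`. -/
noncomputable def sv {m n : ℕ} (X : Matrix (Fin m) (Fin n) ℝ) : Fin m → ℝ :=
  fun i => Real.sqrt ((Matrix.isHermitian_mul_conjTranspose_self X).eigenvalues i)

/-- The singular values arranged in descending order: `svSorted X 0 ≥ svSorted X 1 ≥ ⋯`. -/
noncomputable def svSorted {m n : ℕ} (X : Matrix (Fin m) (Fin n) ℝ) : Fin m → ℝ :=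
  fun i => sv X (Tuple.sort (sv X) i.rev)

/-- `P_a(X) = Σᵢ a σᵢ(X)/(a σᵢ(X) + 1)`. -/
noncomputable def Pa {m n : ℕ} (a : ℝ) (X : Matrix (Fin m) (Fin n) ℝ) : ℝ :=
  ∑ i, a * sv X i / (a * sv X i + 1)

/-- Frobenius norm. -/
noncomputable def frobNorm {m n : ℕ} (X : Matrix (Fin m) (Fin n) ℝ) : ℝ :=
  Real.sqrt (∑ i, ∑ j, (X i j) ^ 2)

/-- Nuclear norm: the sum of the singular values. -/
noncomputable def nuclearNorm {m n : ℕ} (X : Matrix (Fin m) (Fin n) ℝ) : ℝ :=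
  ∑ i, sv X i

/-- The rectangular `m × n` "diagonal" matrix with diagonal entries `σ`. -/
def diagRect {m n : ℕ} (σ : Fin m → ℝ) : Matrix (Fin m) (Fin n) ℝ :=
  Matrix.of fun i j => if (j : ℕ) = (i : ℕ) then σ i else 0

/-- The `r`-restricted isometry constant `δ_r(𝒜)`. -/
noncomputable def ripConst {m n d : ℕ}
    (A : Matrix (Fin m) (Fin n) ℝ →ₗ[ℝ] EuclideanSpace ℝ (Fin d)) (r : ℕ) : ℝ :=
  sInf {δ : ℝ | 0 ≤ δ ∧ ∀ X : Matrix (Fin m) (Fin n) ℝ, X.rank ≤ r →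
    (1 - δ) * frobNorm X ^ 2 ≤ ‖A X‖ ^ 2 ∧ ‖A X‖ ^ 2 ≤ (1 + δ) * frobNorm X ^ 2}


namespace Rot


variable {m n : ℕ}

/-- the Hermitian proof term -/
noncomputable def hherm (X : Matrix (Fin m) (Fin n) ℝ) : (X * Xᴴ).IsHermitian :=
  Matrix.isHermitian_mul_conjTranspose_self X

/-- left singular vectors -/
noncomputable def uvec (X : Matrix (Fin m) (Fin n) ℝ) (i : Fin m) : Fin m → ℝ :=
  ⇑((hherm X).eigenvectorBasis i)

/-- unnormalized right singular vectors -/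
noncomputable def wvec (X : Matrix (Fin m) (Fin n) ℝ) (i : Fin m) : Fin n → ℝ :=
  Xᴴ *ᵥ uvec X i

noncomputable def lam (X : Matrix (Fin m) (Fin n) ℝ) (i : Fin m) : ℝ :=
  (hherm X).eigenvalues i

lemma lam_nonneg (X : Matrix (Fin m) (Fin n) ℝ) (i : Fin m) : 0 ≤ lam X i :=
  (Matrix.posSemidef_self_mul_conjTranspose X).eigenvalues_nonneg i

lemma sv_eq (X : Matrix (Fin m) (Fin n) ℝ) (i : Fin m) : sv X i = Real.sqrt (lam X i) := rfl

lemma sv_nonneg (X : Matrix (Fin m) (Fin n) ℝ) (i : Fin m) : 0 ≤ sv X i := Real.sqrt_nonneg _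

lemma sv_mul_self (X : Matrix (Fin m) (Fin n) ℝ) (i : Fin m) : sv X i * sv X i = lam X i := by
  rw [sv_eq, Real.mul_self_sqrt (lam_nonneg X i)]

lemma mulvec_uvec (X : Matrix (Fin m) (Fin n) ℝ) (i : Fin m) :
    (X * Xᴴ) *ᵥ uvec X i = lam X i • uvec X i :=
  (hherm X).mulVec_eigenvectorBasis i

lemma uvec_dot (X : Matrix (Fin m) (Fin n) ℝ) (i j : Fin m) :
    uvec X i ⬝ᵥ uvec X j = if i = j then 1 else 0 := by
  have h := (orthonormal_iff_ite.mp (hherm X).eigenvectorBasis.orthonormal) i j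
  rw [PiLp.inner_apply] at h
  simpa [RCLike.inner_apply, starRingEnd_apply, dotProduct, uvec, mul_comm] using h

lemma uvec_complete (X : Matrix (Fin m) (Fin n) ℝ) (y : Fin m → ℝ) :
    ∑ i, (uvec X i ⬝ᵥ y) • uvec X i = y := by
  classical
  let B := (hherm X).eigenvectorBasis
  let y' : EuclideanSpace ℝ (Fin m) := WithLp.toLp 2 y
  have h := B.sum_repr y'
  have h2 : ∀ i, B.repr y' i = uvec X i ⬝ᵥ y := by
    intro i
    rw [B.repr_apply_apply, PiLp.inner_apply]
    simp [RCLike.inner_apply, starRingEnd_apply, dotProduct, uvec, y', B, mul_comm]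
  calc ∑ i, (uvec X i ⬝ᵥ y) • uvec X i = ∑ i, B.repr y' i • ⇑(B i) := by
        refine Finset.sum_congr rfl fun i _ => ?_; rw [h2]; rfl
    _ = y := by
        have : (⇑(∑ i, B.repr y' i • B i) : Fin m → ℝ) = ⇑y' := by rw [h]
        simpa [y'] using this


lemma conjT_eq_transpose (X : Matrix (Fin m) (Fin n) ℝ) : Xᴴ = Xᵀ := by
  ext p q; simp [conjTranspose_apply]

lemma wvec_dot (X : Matrix (Fin m) (Fin n) ℝ) (i j : Fin m) :
    wvec X i ⬝ᵥ wvec X j = if i = j then lam X j else 0 := by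
  have key : wvec X i ⬝ᵥ wvec X j = uvec X i ⬝ᵥ ((X * Xᴴ) *ᵥ uvec X j) := by
    calc wvec X i ⬝ᵥ wvec X j
        = (uvec X i ᵥ* X) ⬝ᵥ (Xᵀ *ᵥ uvec X j) := by
          rw [wvec, wvec, conjT_eq_transpose, mulVec_transpose]
      _ = uvec X i ⬝ᵥ (X *ᵥ (Xᵀ *ᵥ uvec X j)) := (dotProduct_mulVec _ _ _).symm
      _ = uvec X i ⬝ᵥ ((X * Xᴴ) *ᵥ uvec X j) := by
          rw [mulVec_mulVec, ← conjT_eq_transpose]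
  rw [key, mulvec_uvec, dotProduct_smul, uvec_dot, smul_eq_mul]
  by_cases h : i = j <;> simp [h]

lemma uvec_complete_coord (X : Matrix (Fin m) (Fin n) ℝ) (p q : Fin m) :
    ∑ i, uvec X i p * uvec X i q = if p = q then 1 else 0 := by
  classical
  have h := congrFun (uvec_complete X (Pi.single q 1)) p
  simp only [Finset.sum_apply, Pi.smul_apply, smul_eq_mul] at h
  have hd : ∀ i, uvec X i ⬝ᵥ Pi.single q 1 = uvec X i q := by
    intro i; simp [dotProduct, Pi.single_apply]
  rw [Finset.sum_congr rfl fun i _ => by rw [hd i]] at h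
  simpa [Pi.single_apply, mul_comm, eq_comm] using h

lemma X_eq_sum (X : Matrix (Fin m) (Fin n) ℝ) :
    X = ∑ i, vecMulVec (uvec X i) (wvec X i) := by
  ext p q
  rw [Matrix.sum_apply]
  have hterm : ∀ i, (vecMulVec (uvec X i) (wvec X i)) p q
      = ∑ r, X r q * (uvec X i p * uvec X i r) := by
    intro i
    rw [vecMulVec_apply]
    have hwq : wvec X i q = ∑ r, X r q * uvec X i r := by
      simp [wvec, mulVec, dotProduct, conjTranspose_apply]
    rw [hwq, Finset.mul_sum]
    exact Finset.sum_congr rfl fun r _ => by ring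
  rw [Finset.sum_congr rfl fun i _ => hterm i, Finset.sum_comm]
  have : ∀ r, ∑ i, X r q * (uvec X i p * uvec X i r)
      = X r q * (if p = r then 1 else 0) := by
    intro r
    rw [← Finset.mul_sum, uvec_complete_coord]
  rw [Finset.sum_congr rfl fun r _ => this r]
  simp

/-- Frobenius pairing -/
def fro (A Q : Matrix (Fin m) (Fin n) ℝ) : ℝ := ∑ i, ∑ j, A i j * Q i j

lemma fro_add_left (A B Q : Matrix (Fin m) (Fin n) ℝ) :
    fro (A + B) Q = fro A Q + fro B Q := by
  simp [fro, add_mul, Finset.sum_add_distrib]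

lemma fro_sum_left {ι : Type*} (s : Finset ι) (F : ι → Matrix (Fin m) (Fin n) ℝ)
    (Q : Matrix (Fin m) (Fin n) ℝ) : fro (∑ i ∈ s, F i) Q = ∑ i ∈ s, fro (F i) Q := by
  classical
  induction s using Finset.induction with
  | empty => simp [fro]
  | insert _ _ hx ih => rw [Finset.sum_insert hx, fro_add_left, ih, Finset.sum_insert hx]

lemma fro_vecMulVec_left (u : Fin m → ℝ) (w : Fin n → ℝ) (Q : Matrix (Fin m) (Fin n) ℝ) :
    fro (vecMulVec u w) Q = u ⬝ᵥ (Q *ᵥ w) := by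
  simp only [fro, vecMulVec_apply, dotProduct, mulVec]
  refine Finset.sum_congr rfl fun i _ => ?_
  rw [Finset.mul_sum]
  refine Finset.sum_congr rfl fun j _ => by ring

def IsContr (Q : Matrix (Fin m) (Fin n) ℝ) : Prop :=
  ∀ y : Fin n → ℝ, (Q *ᵥ y) ⬝ᵥ (Q *ᵥ y) ≤ y ⬝ᵥ y

lemma dot_self_nonneg (y : Fin n → ℝ) : 0 ≤ y ⬝ᵥ y :=
  Finset.sum_nonneg fun i _ => mul_self_nonneg _

lemma cs_dot (u z : Fin m → ℝ) : (u ⬝ᵥ z) ^ 2 ≤ (u ⬝ᵥ u) * (z ⬝ᵥ z) := by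
  have := Finset.sum_mul_sq_le_sq_mul_sq Finset.univ u z
  simpa [dotProduct, sq] using this

/-- key per-term bound: pairing of a singular triple against a contraction -/
lemma pair_term_le (X : Matrix (Fin m) (Fin n) ℝ) (Q : Matrix (Fin m) (Fin n) ℝ)
    (hQ : IsContr Q) (i : Fin m) :
    fro (vecMulVec (uvec X i) (wvec X i)) Q ≤ sv X i := by
  rw [fro_vecMulVec_left]
  set z := Q *ᵥ wvec X i
  have h1 : (uvec X i ⬝ᵥ z) ^ 2 ≤ (uvec X i ⬝ᵥ uvec X i) * (z ⬝ᵥ z) := cs_dot _ _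
  have h2 : uvec X i ⬝ᵥ uvec X i = 1 := by rw [uvec_dot]; simp
  have h3 : z ⬝ᵥ z ≤ lam X i := by
    have := hQ (wvec X i)
    rw [wvec_dot] at this; simpa using this
  have h4 : (uvec X i ⬝ᵥ z) ^ 2 ≤ sv X i ^ 2 := by
    rw [sq (sv X i), sv_mul_self]
    calc (uvec X i ⬝ᵥ z) ^ 2 ≤ 1 * (z ⬝ᵥ z) := by rw [← h2]; exact h1
      _ ≤ lam X i := by rw [one_mul]; exact h3
  calc uvec X i ⬝ᵥ z ≤ |uvec X i ⬝ᵥ z| := le_abs_self _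
    _ = Real.sqrt ((uvec X i ⬝ᵥ z) ^ 2) := (Real.sqrt_sq_eq_abs _).symm
    _ ≤ Real.sqrt (sv X i ^ 2) := Real.sqrt_le_sqrt h4
    _ = |sv X i| := Real.sqrt_sq_eq_abs _
    _ = sv X i := abs_of_nonneg (sv_nonneg X i)

lemma pair_sum_le (X : Matrix (Fin m) (Fin n) ℝ) (T : Finset (Fin m))
    (Q : Matrix (Fin m) (Fin n) ℝ) (hQ : IsContr Q) :
    fro (∑ i ∈ T, vecMulVec (uvec X i) (wvec X i)) Q ≤ ∑ i ∈ T, sv X i := by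
  rw [fro_sum_left]
  exact Finset.sum_le_sum fun i _ => pair_term_le X Q hQ i


lemma dot_self_eq_zero_iff {k : ℕ} (y : Fin k → ℝ) : y ⬝ᵥ y = 0 ↔ y = 0 := by
  constructor
  · intro h
    funext i
    have h2 := (Finset.sum_eq_zero_iff_of_nonneg
      (fun j (_ : j ∈ Finset.univ) => mul_self_nonneg (y j))).mp h i (Finset.mem_univ i)
    have := mul_self_eq_zero.mp h2
    simpa using this
  · intro h; simp [h]

lemma sum_mulVec {ι : Type*} (s : Finset ι) (F : ι → Matrix (Fin m) (Fin n) ℝ)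
    (y : Fin n → ℝ) : (∑ i ∈ s, F i) *ᵥ y = ∑ i ∈ s, (F i *ᵥ y) := by
  classical
  induction s using Finset.induction with
  | empty => simp
  | insert _ _ hx ih => rw [Finset.sum_insert hx, Finset.sum_insert hx, add_mulVec, ih]

lemma dotProduct_sum' {k : ℕ} {ι : Type*} (s : Finset ι) (y : Fin k → ℝ) (f : ι → Fin k → ℝ) :
    y ⬝ᵥ (∑ i ∈ s, f i) = ∑ i ∈ s, y ⬝ᵥ f i := by
  classical
  induction s using Finset.induction with
  | empty => simp
  | insert _ _ hx ih => rw [Finset.sum_insert hx, dotProduct_add, ih, Finset.sum_insert hx]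

lemma sum_dotProduct' {k : ℕ} {ι : Type*} (s : Finset ι) (f : ι → Fin k → ℝ) (y : Fin k → ℝ) :
    (∑ i ∈ s, f i) ⬝ᵥ y = ∑ i ∈ s, f i ⬝ᵥ y := by
  classical
  induction s using Finset.induction with
  | empty => simp
  | insert _ _ hx ih => rw [Finset.sum_insert hx, add_dotProduct, ih, Finset.sum_insert hx]

lemma vecMulVec_mulVec (u : Fin m → ℝ) (w y : Fin n → ℝ) :
    vecMulVec u w *ᵥ y = (w ⬝ᵥ y) • u := by
  funext i
  simp only [mulVec, vecMulVec_apply, dotProduct, Pi.smul_apply, smul_eq_mul]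
  rw [Finset.sum_mul]
  exact Finset.sum_congr rfl fun j _ => by ring

/-- Bessel's inequality, dot-product form -/
lemma bessel {ι : Type*} [DecidableEq ι] (S : Finset ι) (v : ι → Fin n → ℝ)
    (h : ∀ i ∈ S, ∀ j ∈ S, v i ⬝ᵥ v j = if i = j then 1 else 0) (y : Fin n → ℝ) :
    ∑ i ∈ S, (v i ⬝ᵥ y) ^ 2 ≤ y ⬝ᵥ y := by
  classical
  set z := y - ∑ i ∈ S, (v i ⬝ᵥ y) • v i with hz
  have e1 : y ⬝ᵥ (∑ i ∈ S, (v i ⬝ᵥ y) • v i) = ∑ i ∈ S, (v i ⬝ᵥ y) ^ 2 := by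
    rw [dotProduct_sum']
    refine Finset.sum_congr rfl fun i _ => ?_
    rw [dotProduct_smul, smul_eq_mul, dotProduct_comm, sq]
  have e2 : (∑ i ∈ S, (v i ⬝ᵥ y) • v i) ⬝ᵥ y = ∑ i ∈ S, (v i ⬝ᵥ y) ^ 2 := by
    rw [sum_dotProduct']
    refine Finset.sum_congr rfl fun i _ => ?_
    rw [smul_dotProduct, smul_eq_mul, sq]
  have e3 : (∑ i ∈ S, (v i ⬝ᵥ y) • v i) ⬝ᵥ (∑ i ∈ S, (v i ⬝ᵥ y) • v i)
      = ∑ i ∈ S, (v i ⬝ᵥ y) ^ 2 := by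
    rw [sum_dotProduct']
    refine Finset.sum_congr rfl fun i hi => ?_
    rw [smul_dotProduct, dotProduct_sum']
    have hterm : ∀ j ∈ S, v i ⬝ᵥ ((v j ⬝ᵥ y) • v j) = if i = j then (v j ⬝ᵥ y) else 0 := by
      intro j hj
      rw [dotProduct_smul, smul_eq_mul, h i hi j hj]
      by_cases hij : i = j <;> simp [hij]
    rw [Finset.sum_congr rfl hterm, Finset.sum_ite_eq S i (fun j => v j ⬝ᵥ y), if_pos hi,
      smul_eq_mul, sq]
  have hzz : z ⬝ᵥ z = y ⬝ᵥ y - ∑ i ∈ S, (v i ⬝ᵥ y) ^ 2 := by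
    rw [hz, dotProduct_sub, sub_dotProduct, sub_dotProduct, e1, e2, e3]
    ring
  have hnn := dot_self_nonneg z
  linarith [hzz ▸ hnn]

/-- normalized right singular vectors -/
noncomputable def vnorm (X : Matrix (Fin m) (Fin n) ℝ) (i : Fin m) : Fin n → ℝ :=
  (sv X i)⁻¹ • wvec X i

lemma vnorm_dot (X : Matrix (Fin m) (Fin n) ℝ) {i j : Fin m}
    (hi : sv X i ≠ 0) (hj : sv X j ≠ 0) :
    vnorm X i ⬝ᵥ vnorm X j = if i = j then 1 else 0 := by
  rw [vnorm, vnorm, smul_dotProduct, dotProduct_smul, wvec_dot, smul_eq_mul, smul_eq_mul]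
  by_cases hij : i = j
  · subst hij
    rw [if_pos rfl, if_pos rfl, ← sv_mul_self]
    field_simp
  · simp [hij]

/-- the dual witness for the nuclear norm -/
noncomputable def qwit (X : Matrix (Fin m) (Fin n) ℝ) : Matrix (Fin m) (Fin n) ℝ :=
  ∑ i ∈ Finset.univ.filter (fun i => sv X i ≠ 0), vecMulVec (uvec X i) (vnorm X i)

lemma qwit_mulVec (X : Matrix (Fin m) (Fin n) ℝ) (y : Fin n → ℝ) :
    qwit X *ᵥ y = ∑ i ∈ Finset.univ.filter (fun i => sv X i ≠ 0),
      (vnorm X i ⬝ᵥ y) • uvec X i := by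
  rw [qwit, sum_mulVec]
  exact Finset.sum_congr rfl fun i _ => vecMulVec_mulVec _ _ _

lemma qwit_contr (X : Matrix (Fin m) (Fin n) ℝ) : IsContr (qwit X) := by
  intro y
  rw [qwit_mulVec]
  set S := Finset.univ.filter (fun i => sv X i ≠ 0) with hS
  have expand : (∑ i ∈ S, (vnorm X i ⬝ᵥ y) • uvec X i) ⬝ᵥ
      (∑ i ∈ S, (vnorm X i ⬝ᵥ y) • uvec X i) = ∑ i ∈ S, (vnorm X i ⬝ᵥ y) ^ 2 := by
    rw [sum_dotProduct']
    refine Finset.sum_congr rfl fun i hi => ?_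
    rw [smul_dotProduct, dotProduct_sum']
    have hterm : ∀ j ∈ S, uvec X i ⬝ᵥ ((vnorm X j ⬝ᵥ y) • uvec X j)
        = if i = j then (vnorm X j ⬝ᵥ y) else 0 := by
      intro j _
      rw [dotProduct_smul, smul_eq_mul, uvec_dot]
      by_cases hij : i = j <;> simp [hij]
    rw [Finset.sum_congr rfl hterm, Finset.sum_ite_eq S i, if_pos hi, smul_eq_mul, sq]
  rw [expand]
  refine bessel S (vnorm X) (fun i hi j hj => ?_) y
  exact vnorm_dot X (by simpa [hS] using hi) (by simpa [hS] using hj)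

lemma wvec_eq_zero_of_sv_zero (X : Matrix (Fin m) (Fin n) ℝ) {i : Fin m}
    (h : sv X i = 0) : wvec X i = 0 := by
  have hl : lam X i = 0 := by
    rw [← sv_mul_self, h, mul_zero]
  have : wvec X i ⬝ᵥ wvec X i = 0 := by rw [wvec_dot]; simp [hl]
  exact (dot_self_eq_zero_iff _).mp this

lemma fro_term_qwit (X : Matrix (Fin m) (Fin n) ℝ) (j : Fin m) :
    fro (vecMulVec (uvec X j) (wvec X j)) (qwit X) = sv X j := by
  classical
  rw [fro_vecMulVec_left, qwit_mulVec]
  by_cases hj : sv X j = 0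
  · rw [wvec_eq_zero_of_sv_zero X hj]
    have hzero : ∀ i ∈ Finset.univ.filter (fun i => sv X i ≠ 0),
        (vnorm X i ⬝ᵥ (0 : Fin n → ℝ)) • uvec X i = (0 : Fin m → ℝ) := by
      intro i _; simp
    rw [Finset.sum_congr rfl hzero]
    simp [hj]
  · rw [dotProduct_sum']
    have hterm : ∀ i ∈ Finset.univ.filter (fun i => sv X i ≠ 0),
        uvec X j ⬝ᵥ ((vnorm X i ⬝ᵥ wvec X j) • uvec X i)
        = if j = i then sv X j else 0 := by
      intro i hi
      have hi' : sv X i ≠ 0 := by simpa using hi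
      rw [dotProduct_smul, smul_eq_mul, uvec_dot]
      by_cases hij : j = i
      · subst hij
        rw [if_pos rfl, if_pos rfl, mul_one, vnorm, smul_dotProduct, wvec_dot, if_pos rfl,
          smul_eq_mul, ← sv_mul_self]
        field_simp
      · simp [hij, Ne.symm hij]
    rw [Finset.sum_congr rfl hterm,
      Finset.sum_ite_eq (Finset.univ.filter (fun i => sv X i ≠ 0)) j]
    simp [hj]

lemma fro_decomp (X : Matrix (Fin m) (Fin n) ℝ) (Q : Matrix (Fin m) (Fin n) ℝ) :
    fro X Q = ∑ j, fro (vecMulVec (uvec X j) (wvec X j)) Q := by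
  conv_lhs => rw [X_eq_sum X]
  rw [fro_sum_left]

lemma fro_qwit (X : Matrix (Fin m) (Fin n) ℝ) : fro X (qwit X) = nuclearNorm X := by
  rw [fro_decomp, nuclearNorm]
  exact Finset.sum_congr rfl fun j _ => fro_term_qwit X j

lemma fro_le_nuclear (X Q : Matrix (Fin m) (Fin n) ℝ) (hQ : IsContr Q) :
    fro X Q ≤ nuclearNorm X := by
  conv_lhs => rw [X_eq_sum X]
  exact pair_sum_le X Finset.univ Q hQ

lemma nuclear_triangle (X Y : Matrix (Fin m) (Fin n) ℝ) :
    nuclearNorm (X + Y) ≤ nuclearNorm X + nuclearNorm Y := by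
  have h := fro_qwit (X + Y)
  rw [fro_add_left] at h
  have h1 := fro_le_nuclear X (qwit (X + Y)) (qwit_contr _)
  have h2 := fro_le_nuclear Y (qwit (X + Y)) (qwit_contr _)
  linarith

lemma nuclear_trunc_le (X : Matrix (Fin m) (Fin n) ℝ) (T : Finset (Fin m)) :
    nuclearNorm (∑ i ∈ T, vecMulVec (uvec X i) (wvec X i)) ≤ ∑ i ∈ T, sv X i := by
  set M := ∑ i ∈ T, vecMulVec (uvec X i) (wvec X i) with hM
  rw [← fro_qwit M]
  exact pair_sum_le X T (qwit M) (qwit_contr M)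

-- ============ SumRk ============

def SumRk (k : ℕ) (D : Matrix (Fin m) (Fin n) ℝ) : Prop :=
  ∃ p : ℕ → Fin m → ℝ, ∃ q : ℕ → Fin n → ℝ,
    D = ∑ j ∈ Finset.range k, vecMulVec (p j) (q j)

lemma vecMulVec_zero_right (u : Fin m → ℝ) : vecMulVec u (0 : Fin n → ℝ) = 0 := by
  ext i j; simp [vecMulVec_apply]

lemma SumRk.mono {k k' : ℕ} {D : Matrix (Fin m) (Fin n) ℝ} (h : SumRk k D) (hk : k ≤ k') :
    SumRk k' D := by
  obtain ⟨p, q, rfl⟩ := h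
  refine ⟨p, fun j => if j < k then q j else 0, ?_⟩
  rw [← Finset.sum_subset (Finset.range_subset_range.mpr hk) ?_]
  · refine Finset.sum_congr rfl fun j hj => ?_
    have hjk : j < k := Finset.mem_range.mp hj
    simp [hjk]
  · intro j _ hj
    have hjk : ¬ j < k := by simpa using hj
    simp only [hjk, if_false]
    exact vecMulVec_zero_right _

lemma sum_range_add' {M : Type*} [AddCommMonoid M] (f : ℕ → M) (k l : ℕ) :
    ∑ j ∈ Finset.range (k + l), f j
      = ∑ j ∈ Finset.range k, f j + ∑ j ∈ Finset.range l, f (k + j) := by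
  induction l with
  | zero => simp
  | succ l ih => rw [Nat.add_succ, Finset.sum_range_succ, ih, Finset.sum_range_succ, add_assoc]

lemma SumRk.add {k l : ℕ} {C D : Matrix (Fin m) (Fin n) ℝ} (hC : SumRk k C) (hD : SumRk l D) :
    SumRk (k + l) (C + D) := by
  obtain ⟨p1, q1, rfl⟩ := hC
  obtain ⟨p2, q2, rfl⟩ := hD
  refine ⟨fun j => if j < k then p1 j else p2 (j - k),
          fun j => if j < k then q1 j else q2 (j - k), ?_⟩
  rw [sum_range_add']
  congr 1
  · refine Finset.sum_congr rfl fun j hj => ?_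
    have hjk : j < k := Finset.mem_range.mp hj
    simp [hjk]
  · refine Finset.sum_congr rfl fun j _ => ?_
    have hjk : ¬ k + j < k := by omega
    simp [hjk, Nat.add_sub_cancel_left]

lemma sumRk_one (u : Fin m → ℝ) (w : Fin n → ℝ) : SumRk 1 (vecMulVec u w) :=
  ⟨fun _ => u, fun _ => w, by rw [Finset.sum_range_one]⟩

lemma sumRk_zero : SumRk 0 (0 : Matrix (Fin m) (Fin n) ℝ) :=
  ⟨fun _ => 0, fun _ => 0, by simp⟩

lemma sumRk_finset (T : Finset (Fin m)) (v : Fin m → Fin m → ℝ) (w : Fin m → Fin n → ℝ) :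
    SumRk T.card (∑ i ∈ T, vecMulVec (v i) (w i)) := by
  classical
  induction T using Finset.induction with
  | empty => simpa using (sumRk_zero : SumRk 0 (0 : Matrix (Fin m) (Fin n) ℝ))
  | @insert x s hx ih =>
    rw [Finset.sum_insert hx, Finset.card_insert_of_notMem hx]
    have := (sumRk_one (v x) (w x)).add ih
    rwa [add_comm 1 s.card] at this

lemma sumRk_kernel {k : ℕ} {D : Matrix (Fin m) (Fin n) ℝ} (h : SumRk k D) :
    ∃ W : Submodule ℝ (Fin n → ℝ),
      n ≤ Module.finrank ℝ W + k ∧ ∀ y ∈ W, D *ᵥ y = 0 := by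
  obtain ⟨p, q, rfl⟩ := h
  set Qm : Matrix (Fin k) (Fin n) ℝ := Matrix.of (fun j l => q j l) with hQm
  refine ⟨LinearMap.ker Qm.mulVecLin, ?_, ?_⟩
  · have h1 := LinearMap.finrank_range_add_finrank_ker Qm.mulVecLin
    have h2 : Module.finrank ℝ (LinearMap.range Qm.mulVecLin) ≤ k := by
      have := Submodule.finrank_le (LinearMap.range Qm.mulVecLin)
      rwa [Module.finrank_fin_fun] at this
    rw [Module.finrank_fin_fun] at h1
    omega
  · intro y hy
    rw [LinearMap.mem_ker] at hy
    rw [sum_mulVec]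
    refine Finset.sum_eq_zero fun j hj => ?_
    rw [vecMulVec_mulVec]
    have hq : q j ⬝ᵥ y = 0 := by
      have := congrFun (show Qm.mulVecLin y = 0 from hy) ⟨j, Finset.mem_range.mp hj⟩
      simpa [Matrix.mulVecLin_apply, Matrix.mulVec, hQm, dotProduct] using this
    rw [hq, zero_smul]


/-- the permutation sorting singular values in descending order -/
noncomputable def sperm (X : Matrix (Fin m) (Fin n) ℝ) : Equiv.Perm (Fin m) :=
  (Fin.revPerm).trans (Tuple.sort (sv X))

lemma svSorted_eq (X : Matrix (Fin m) (Fin n) ℝ) (i : Fin m) :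
    svSorted X i = sv X (sperm X i) := rfl

lemma svSorted_anti (X : Matrix (Fin m) (Fin n) ℝ) {i j : Fin m} (hij : i ≤ j) :
    svSorted X j ≤ svSorted X i := by
  have h := Tuple.monotone_sort (sv X)
  have : j.rev ≤ i.rev := Fin.rev_le_rev.mpr hij
  exact h this

lemma svSorted_nonneg (X : Matrix (Fin m) (Fin n) ℝ) (i : Fin m) : 0 ≤ svSorted X i :=
  sv_nonneg X _

lemma sum_comp_sperm (X : Matrix (Fin m) (Fin n) ℝ) (f : ℝ → ℝ) :
    ∑ i, f (svSorted X i) = ∑ i, f (sv X i) := by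
  simp only [svSorted_eq]
  exact Equiv.sum_comp (sperm X) (fun j => f (sv X j))

/-- orthonormal expansion of squared norm -/
lemma dot_sum_sq {N : ℕ} {ι : Type} [DecidableEq ι] (S : Finset ι) (v : ι → Fin N → ℝ)
    (h : ∀ i ∈ S, ∀ j ∈ S, v i ⬝ᵥ v j = if i = j then 1 else 0) (c : ι → ℝ) :
    (∑ i ∈ S, c i • v i) ⬝ᵥ (∑ i ∈ S, c i • v i) = ∑ i ∈ S, (c i) ^ 2 := by
  rw [sum_dotProduct']
  refine Finset.sum_congr rfl fun i hi => ?_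
  rw [smul_dotProduct, dotProduct_sum']
  have hterm : ∀ j ∈ S, v i ⬝ᵥ (c j • v j) = if i = j then c j else 0 := by
    intro j hj
    rw [dotProduct_smul, smul_eq_mul, h i hi j hj]
    by_cases hij : i = j <;> simp [hij]
  rw [Finset.sum_congr rfl hterm, Finset.sum_ite_eq S i c, if_pos hi, smul_eq_mul, sq]

lemma wvec_eq_sv_smul_vnorm (X : Matrix (Fin m) (Fin n) ℝ) {i : Fin m} (h : sv X i ≠ 0) :
    wvec X i = sv X i • vnorm X i := by
  rw [vnorm, smul_smul, mul_inv_cancel₀ h, one_smul]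

/-- Eckart–Young, existence direction (truncation) -/
lemma ey2 (M : Matrix (Fin m) (Fin n) ℝ) (k : ℕ) (hk : k < m) :
    ∃ D, SumRk k D ∧ ∀ y : Fin n → ℝ,
      ((M - D) *ᵥ y) ⬝ᵥ ((M - D) *ᵥ y) ≤ (svSorted M ⟨k, hk⟩)^2 * (y ⬝ᵥ y) := by
  classical
  set c := svSorted M ⟨k, hk⟩ with hc
  set T : Finset (Fin m) := Finset.univ.filter (fun i => (((sperm M).symm i : Fin m) : ℕ) < k)
    with hT
  refine ⟨∑ i ∈ T, vecMulVec (uvec M i) (wvec M i), ?_, ?_⟩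
  · refine (sumRk_finset T _ _).mono ?_
    have : T.card ≤ (Finset.range k).card := by
      refine Finset.card_le_card_of_injOn (fun i => (((sperm M).symm i : Fin m) : ℕ)) ?_ ?_
      · intro i hi
        rw [Finset.mem_coe, Finset.mem_range]
        exact (Finset.mem_filter.mp (Finset.mem_coe.mp hi)).2
      · intro i _ j _ hij
        have := Fin.val_injective hij
        exact (sperm M).symm.injective this
    simpa using this
  · intro y
    have hMD : M - (∑ i ∈ T, vecMulVec (uvec M i) (wvec M i))
        = ∑ i ∈ Finset.univ.filter (fun i => ¬ ((((sperm M).symm i : Fin m) : ℕ) < k)),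
            vecMulVec (uvec M i) (wvec M i) := by
      have := Finset.sum_filter_add_sum_filter_not Finset.univ
        (fun i => (((sperm M).symm i : Fin m) : ℕ) < k)
        (fun i => vecMulVec (uvec M i) (wvec M i))
      rw [sub_eq_iff_eq_add]
      rw [← X_eq_sum M] at this
      exact this.symm.trans (add_comm _ _)
    rw [hMD, sum_mulVec]
    set T' := Finset.univ.filter (fun i => ¬ ((((sperm M).symm i : Fin m) : ℕ) < k)) with hT'
    have hzy : ∀ i ∈ T', (vecMulVec (uvec M i) (wvec M i)) *ᵥ y = (wvec M i ⬝ᵥ y) • uvec M i :=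
      fun i _ => vecMulVec_mulVec _ _ _
    rw [Finset.sum_congr rfl hzy]
    rw [dot_sum_sq T' (uvec M) (fun i _ j _ => uvec_dot M i j) (fun i => wvec M i ⬝ᵥ y)]
    -- now bound the sum
    have hcnn : 0 ≤ c := hc ▸ svSorted_nonneg M _
    have key : ∀ i ∈ T', (wvec M i ⬝ᵥ y) ^ 2 ≤
        (if sv M i ≠ 0 then c ^ 2 * (vnorm M i ⬝ᵥ y) ^ 2 else 0) := by
      intro i hi
      have hpos : (k : ℕ) ≤ (((sperm M).symm i : Fin m) : ℕ) := by
        have := (Finset.mem_filter.mp hi).2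
        omega
      have hsv_le : sv M i ≤ c := by
        have : svSorted M ((sperm M).symm i) = sv M i := by
          rw [svSorted_eq, Equiv.apply_symm_apply]
        rw [← this, hc]
        exact svSorted_anti M (by exact hpos)
      by_cases hz : sv M i = 0
      · rw [wvec_eq_zero_of_sv_zero M hz]
        simp [hz]
      · rw [if_pos hz, wvec_eq_sv_smul_vnorm M hz, smul_dotProduct, smul_eq_mul, mul_pow]
        have h1 : sv M i ^ 2 ≤ c ^ 2 := by
          have := sv_nonneg M i
          nlinarith
        nlinarith [sq_nonneg (vnorm M i ⬝ᵥ y)]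
    calc ∑ i ∈ T', (wvec M i ⬝ᵥ y) ^ 2
        ≤ ∑ i ∈ T', (if sv M i ≠ 0 then c ^ 2 * (vnorm M i ⬝ᵥ y) ^ 2 else 0) :=
          Finset.sum_le_sum key
      _ = ∑ i ∈ T'.filter (fun i => sv M i ≠ 0), c ^ 2 * (vnorm M i ⬝ᵥ y) ^ 2 :=
          (Finset.sum_filter _ _).symm
      _ = c ^ 2 * ∑ i ∈ T'.filter (fun i => sv M i ≠ 0), (vnorm M i ⬝ᵥ y) ^ 2 := by
          rw [Finset.mul_sum]
      _ ≤ c ^ 2 * (y ⬝ᵥ y) := by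
          refine mul_le_mul_of_nonneg_left ?_ (by positivity)
          refine bessel _ (vnorm M) (fun i hi j hj => ?_) y
          exact vnorm_dot M (Finset.mem_filter.mp hi).2 (Finset.mem_filter.mp hj).2

lemma dot_self_pos {k : ℕ} {y : Fin k → ℝ} (h : y ≠ 0) : 0 < y ⬝ᵥ y := by
  rcases lt_or_eq_of_le (dot_self_nonneg y) with h1 | h1
  · exact h1
  · exact absurd ((dot_self_eq_zero_iff y).mp h1.symm) h

/-- Eckart–Young, lower-bound direction -/
lemma ey1 (X D : Matrix (Fin m) (Fin n) ℝ) (k : Fin m) (hD : SumRk (k : ℕ) D) (c : ℝ)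
    (hc : 0 ≤ c)
    (hbd : ∀ y : Fin n → ℝ, ((X - D) *ᵥ y) ⬝ᵥ ((X - D) *ᵥ y) ≤ c ^ 2 * (y ⬝ᵥ y)) :
    svSorted X k ≤ c := by
  classical
  by_contra hcon
  push_neg at hcon
  have hkpos : 0 < svSorted X k := lt_of_le_of_lt hc hcon
  -- the top k+1 right singular vectors
  have hk1m : (k : ℕ) + 1 ≤ m := k.isLt
  set emb : Fin ((k : ℕ) + 1) → Fin m := fun j => sperm X (Fin.castLE hk1m j) with hemb
  have hemb_inj : Function.Injective emb := by
    intro a b hab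
    have := (sperm X).injective hab
    exact Fin.castLE_injective hk1m this
  have hsv_pos : ∀ j : Fin ((k : ℕ) + 1), 0 < sv X (emb j) := by
    intro j
    have h1 : svSorted X (Fin.castLE hk1m j) = sv X (emb j) := rfl
    have h2 : Fin.castLE hk1m j ≤ k := by
      have := j.isLt
      exact Fin.mk_le_mk.mpr (by omega)
    calc (0:ℝ) < svSorted X k := hkpos
      _ ≤ svSorted X (Fin.castLE hk1m j) := svSorted_anti X h2
      _ = sv X (emb j) := h1
  set g : Fin ((k : ℕ) + 1) → (Fin n → ℝ) := fun j => vnorm X (emb j) with hg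
  have hg_on : ∀ i ∈ (Finset.univ : Finset (Fin ((k : ℕ) + 1))), ∀ j ∈ Finset.univ,
      g i ⬝ᵥ g j = if i = j then 1 else 0 := by
    intro i _ j _
    rw [hg]
    rw [vnorm_dot X (ne_of_gt (hsv_pos i)) (ne_of_gt (hsv_pos j))]
    by_cases hij : i = j
    · simp [hij]
    · have : emb i ≠ emb j := fun hcc => hij (hemb_inj hcc)
      simp [hij, this]
  have hg_li : LinearIndependent ℝ g := by
    rw [Fintype.linearIndependent_iff]
    intro cc hcc i
    have := congrArg (fun z => g i ⬝ᵥ z) hcc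
    rw [dotProduct_sum'] at this
    have hterm : ∀ j ∈ Finset.univ, g i ⬝ᵥ (cc j • g j) = if i = j then cc j else 0 := by
      intro j _
      rw [dotProduct_smul, smul_eq_mul, hg_on i (Finset.mem_univ i) j (Finset.mem_univ j)]
      by_cases hij : i = j <;> simp [hij]
    rw [Finset.sum_congr rfl hterm, Finset.sum_ite_eq Finset.univ i cc,
      if_pos (Finset.mem_univ i)] at this
    simpa using this
  set V := Submodule.span ℝ (Set.range g) with hV
  have hVrank : Module.finrank ℝ V = (k : ℕ) + 1 := by
    rw [hV, finrank_span_eq_card hg_li, Fintype.card_fin]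
  obtain ⟨W, hWrank, hWker⟩ := sumRk_kernel hD
  -- intersection is nontrivial
  have hsup : Module.finrank ℝ (V ⊔ W : Submodule ℝ (Fin n → ℝ)) ≤ n := by
    have := Submodule.finrank_le (V ⊔ W : Submodule ℝ (Fin n → ℝ))
    rwa [Module.finrank_fin_fun] at this
  have hinf_pos : 0 < Module.finrank ℝ (V ⊓ W : Submodule ℝ (Fin n → ℝ)) := by
    have := Submodule.finrank_sup_add_finrank_inf_eq V W
    omega
  have hne : (V ⊓ W : Submodule ℝ (Fin n → ℝ)) ≠ ⊥ := by
    intro hbot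
    rw [hbot, finrank_bot] at hinf_pos
    exact lt_irrefl 0 hinf_pos
  obtain ⟨y, hyVW, hy0⟩ := Submodule.exists_mem_ne_zero_of_ne_bot hne
  have hyV : y ∈ V := hyVW.1
  have hyW : y ∈ W := hyVW.2
  obtain ⟨cc, hy_eq⟩ := (Submodule.mem_span_range_iff_exists_fun ℝ).mp (hV ▸ hyV)
  have hy_sum : y = ∑ j, cc j • g j := hy_eq.symm
  -- y ⬝ᵥ y = ∑ cc²
  have hyy : y ⬝ᵥ y = ∑ j, (cc j) ^ 2 := by
    rw [hy_sum]
    exact dot_sum_sq Finset.univ g hg_on cc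
  -- (X y) norm² ≥ svSorted X k ^2 * ∑ cc²
  have hXy : X *ᵥ y = ∑ i, (wvec X i ⬝ᵥ y) • uvec X i := by
    conv_lhs => rw [X_eq_sum X]
    rw [sum_mulVec]
    exact Finset.sum_congr rfl fun i _ => vecMulVec_mulVec _ _ _
  have hXy_sq : (X *ᵥ y) ⬝ᵥ (X *ᵥ y) = ∑ i, (wvec X i ⬝ᵥ y) ^ 2 := by
    rw [hXy]
    exact dot_sum_sq Finset.univ (uvec X) (fun i _ j _ => uvec_dot X i j) _
  have hcoef : ∀ j : Fin ((k : ℕ) + 1), wvec X (emb j) ⬝ᵥ y = sv X (emb j) * cc j := by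
    intro j
    rw [wvec_eq_sv_smul_vnorm X (ne_of_gt (hsv_pos j)), smul_dotProduct, smul_eq_mul]
    congr 1
    rw [hy_sum, dotProduct_sum']
    have hterm : ∀ j' ∈ (Finset.univ : Finset (Fin ((k : ℕ) + 1))),
        vnorm X (emb j) ⬝ᵥ (cc j' • g j') = if j = j' then cc j' else 0 := by
      intro j' _
      rw [dotProduct_smul, smul_eq_mul,
        show vnorm X (emb j) ⬝ᵥ g j' = if j = j' then 1 else 0 from
          hg_on j (Finset.mem_univ j) j' (Finset.mem_univ j')]
      by_cases hjj : j = j' <;> simp [hjj]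
    rw [Finset.sum_congr rfl hterm, Finset.sum_ite_eq Finset.univ j cc,
      if_pos (Finset.mem_univ j)]
  have hsub : ∑ j : Fin ((k : ℕ) + 1), (wvec X (emb j) ⬝ᵥ y) ^ 2
      ≤ ∑ i, (wvec X i ⬝ᵥ y) ^ 2 := by
    have := Finset.sum_image (f := fun i => (wvec X i ⬝ᵥ y) ^ 2) (g := emb)
      (fun a _ b _ hab => hemb_inj hab) (s := Finset.univ)
    rw [← this]
    exact Finset.sum_le_sum_of_subset_of_nonneg (Finset.subset_univ _)
      (fun i _ _ => sq_nonneg _)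
  have hlow : svSorted X k ^ 2 * (y ⬝ᵥ y) ≤ (X *ᵥ y) ⬝ᵥ (X *ᵥ y) := by
    rw [hXy_sq, hyy, Finset.mul_sum]
    refine le_trans ?_ hsub
    refine Finset.sum_le_sum fun j _ => ?_
    rw [hcoef j, mul_pow]
    have h1 : svSorted X k ≤ sv X (emb j) := by
      have h2 : Fin.castLE hk1m j ≤ k := Fin.mk_le_mk.mpr (by omega)
      exact svSorted_anti X h2
    exact mul_le_mul_of_nonneg_right (pow_le_pow_left₀ hkpos.le h1 2) (sq_nonneg _)
  -- D y = 0 so (X−D) y = X y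
  have hDy : D *ᵥ y = 0 := hWker y hyW
  have hXDy : (X - D) *ᵥ y = X *ᵥ y := by
    rw [sub_mulVec, hDy, sub_zero]
  have hup := hbd y
  rw [hXDy] at hup
  have hyypos : 0 < y ⬝ᵥ y := dot_self_pos hy0
  have hfinal : svSorted X k ^ 2 ≤ c ^ 2 := by
    have h1 : svSorted X k ^ 2 * (y ⬝ᵥ y) ≤ c ^ 2 * (y ⬝ᵥ y) := le_trans hlow hup
    exact le_of_mul_le_mul_right h1 hyypos
  nlinarith

/-- Weyl-type inequality -/
lemma weyl (X M C : Matrix (Fin m) (Fin n) ℝ) (r : ℕ) (hX : X = M + C) (hC : SumRk r C)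
    (i : Fin m) (hge : r ≤ (i : ℕ)) :
    svSorted X i ≤ svSorted M ⟨(i : ℕ) - r, lt_of_le_of_lt (Nat.sub_le _ _) i.isLt⟩ := by
  have hkm : (i : ℕ) - r < m := lt_of_le_of_lt (Nat.sub_le _ _) i.isLt
  obtain ⟨D, hD, hbd⟩ := ey2 M ((i : ℕ) - r) hkm
  set c := svSorted M ⟨(i : ℕ) - r, hkm⟩ with hc
  have hCD : SumRk (i : ℕ) (C + D) := by
    have := hC.add hD
    rwa [show r + ((i : ℕ) - r) = (i : ℕ) by omega] at this
  refine ey1 X (C + D) i hCD c (svSorted_nonneg M _) ?_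
  intro y
  have : X - (C + D) = M - D := by
    rw [hX]; abel
  rw [this]
  exact hbd y

noncomputable def Ksum (s : ℝ) (X : Matrix (Fin m) (Fin n) ℝ) : ℝ :=
  ∑ i, min (sv X i) s

lemma ksum_eq_sorted (s : ℝ) (X : Matrix (Fin m) (Fin n) ℝ) :
    Ksum s X = ∑ i, min (svSorted X i) s := by
  rw [Ksum, ← sum_comp_sperm X (fun t => min t s)]

/-- K_s lower bound for perturbed matrices -/
lemma ksum_le (X M C : Matrix (Fin m) (Fin n) ℝ) (r : ℕ) (s : ℝ) (hs : 0 ≤ s)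
    (hX : X = M + C) (hC : SumRk r C) :
    Ksum s X ≤ nuclearNorm M + (r : ℝ) * s := by
  classical
  rw [ksum_eq_sorted]
  set φ : Fin m → Fin m := fun i => ⟨(i : ℕ) - r, lt_of_le_of_lt (Nat.sub_le _ _) i.isLt⟩
    with hφ
  have hbound : ∀ i : Fin m, min (svSorted X i) s
      ≤ if (i : ℕ) < r then s else svSorted M (φ i) := by
    intro i
    by_cases h : (i : ℕ) < r
    · rw [if_pos h]; exact min_le_right _ _
    · rw [if_neg h]
      refine le_trans (min_le_left _ _) ?_
      exact weyl X M C r hX hC i (by omega)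
  refine le_trans (Finset.sum_le_sum fun i _ => hbound i) ?_
  rw [Finset.sum_ite]
  have h1 : ∑ _i ∈ Finset.univ.filter (fun i : Fin m => (i : ℕ) < r), s
      ≤ (r : ℝ) * s := by
    rw [Finset.sum_const, nsmul_eq_mul]
    refine mul_le_mul_of_nonneg_right ?_ hs
    have : (Finset.univ.filter (fun i : Fin m => (i : ℕ) < r)).card
        ≤ (Finset.range r).card := by
      refine Finset.card_le_card_of_injOn (fun i => (i : ℕ)) ?_ ?_
      · intro i hi; rw [Finset.mem_coe, Finset.mem_range]; exact (Finset.mem_filter.mp (Finset.mem_coe.mp hi)).2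
      · intro i _ j _ hij; exact Fin.val_injective hij
    rw [Finset.card_range] at this
    exact_mod_cast this
  have h2 : ∑ i ∈ Finset.univ.filter (fun i : Fin m => ¬ (i : ℕ) < r), svSorted M (φ i)
      ≤ nuclearNorm M := by
    have hinj : Set.InjOn φ (Finset.univ.filter (fun i : Fin m => ¬ (i : ℕ) < r)) := by
      intro i hi j hj hij
      have hi' : r ≤ (i : ℕ) := by
        have := (Finset.mem_filter.mp (by exact_mod_cast hi)).2; omega
      have hj' : r ≤ (j : ℕ) := by
        have := (Finset.mem_filter.mp (by exact_mod_cast hj)).2; omega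
      have := congrArg Fin.val hij
      simp only [hφ] at this
      exact Fin.val_injective (by omega : (i : ℕ) = (j : ℕ))
    rw [← Finset.sum_image (f := fun j => svSorted M j) (g := φ)
      (fun a ha b hb hab => hinj ha hb hab)]
    have : nuclearNorm M = ∑ j, svSorted M j := by
      rw [nuclearNorm, ← sum_comp_sperm M (fun t => t)]
    rw [this]
    exact Finset.sum_le_sum_of_subset_of_nonneg (Finset.subset_univ _)
      (fun j _ _ => svSorted_nonneg M j)
  linarith

/-- truncation decomposition achieving K_s -/
lemma ksum_trunc (X : Matrix (Fin m) (Fin n) ℝ) (s : ℝ) :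
    ∃ (M : Matrix (Fin m) (Fin n) ℝ) (k : ℕ), SumRk k (X - M) ∧
      nuclearNorm M + (k : ℝ) * s ≤ Ksum s X := by
  classical
  set T : Finset (Fin m) := Finset.univ.filter (fun i => s < sv X i) with hT
  set M := ∑ i ∈ Finset.univ.filter (fun i => ¬ s < sv X i), vecMulVec (uvec X i) (wvec X i)
    with hM
  set C := ∑ i ∈ T, vecMulVec (uvec X i) (wvec X i) with hC
  have hsplit : M + C = X := by
    rw [hM, hC, hT, add_comm]
    rw [Finset.sum_filter_add_sum_filter_not Finset.univ (fun i => s < sv X i)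
      (fun i => vecMulVec (uvec X i) (wvec X i))]
    exact (X_eq_sum X).symm
  refine ⟨M, T.card, ?_, ?_⟩
  · have : X - M = C := by rw [← hsplit]; abel
    rw [this, hC]
    exact sumRk_finset T _ _
  · have h1 : nuclearNorm M ≤ ∑ i ∈ Finset.univ.filter (fun i => ¬ s < sv X i), sv X i :=
      nuclear_trunc_le X _
    have h2 : (T.card : ℝ) * s = ∑ _i ∈ T, s := by
      rw [Finset.sum_const, nsmul_eq_mul]
    have h3 : ∑ i ∈ Finset.univ.filter (fun i => ¬ s < sv X i), sv X i + ∑ _i ∈ T, s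
        = Ksum s X := by
      rw [Ksum, hT]
      rw [show ∀ (A B : ℝ), A + B = B + A from fun A B => add_comm A B]
      rw [← Finset.sum_filter_add_sum_filter_not Finset.univ (fun i => s < sv X i)
        (fun i => min (sv X i) s)]
      congr 1
      · exact Finset.sum_congr rfl fun i hi =>
          (min_eq_right (le_of_lt (Finset.mem_filter.mp hi).2)).symm
      · exact Finset.sum_congr rfl fun i hi => by
          have := (Finset.mem_filter.mp hi).2
          rw [min_eq_left (by linarith [not_lt.mp this])]
    linarith
  
/-- K_s is subadditive -/
lemma ksum_subadd (s : ℝ) (hs : 0 ≤ s) (X Y : Matrix (Fin m) (Fin n) ℝ) :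
    Ksum s (X + Y) ≤ Ksum s X + Ksum s Y := by
  obtain ⟨M1, k1, hC1, hb1⟩ := ksum_trunc X s
  obtain ⟨M2, k2, hC2, hb2⟩ := ksum_trunc Y s
  have hdecomp : X + Y = (M1 + M2) + ((X - M1) + (Y - M2)) := by abel
  have hrk : SumRk (k1 + k2) ((X - M1) + (Y - M2)) := hC1.add hC2
  have h := ksum_le (X + Y) (M1 + M2) _ (k1 + k2) s hs hdecomp hrk
  have htri := nuclear_triangle M1 M2
  push_cast at h ⊢
  nlinarith [h, htri, hb1, hb2]

-- interpolation


section Interp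
variable (a : ℝ)

/-- the concave penalty function -/
noncomputable def fpen (t : ℝ) : ℝ := a * t / (a * t + 1)

/-- chord slope of `fpen` -/
noncomputable def slope (u v : ℝ) : ℝ := a / ((a * u + 1) * (a * v + 1))

lemma denom_pos (ha : 0 < a) {t : ℝ} (ht : 0 ≤ t) : 0 < a * t + 1 := by nlinarith

lemma fpen_zero : fpen a 0 = 0 := by simp [fpen]

lemma slope_nonneg (ha : 0 < a) {u v : ℝ} (hu : 0 ≤ u) (hv : 0 ≤ v) : 0 ≤ slope a u v := by
  have h1 := denom_pos a ha hu
  have h2 := denom_pos a ha hv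
  exact div_nonneg ha.le (mul_pos h1 h2).le

lemma fpen_sub (ha : 0 < a) (u v : ℝ) (hu : 0 ≤ u) (hv : 0 ≤ v) :
    fpen a v - fpen a u = slope a u v * (v - u) := by
  have h1 := denom_pos a ha hu
  have h2 := denom_pos a ha hv
  rw [fpen, fpen, slope]
  field_simp
  ring

lemma slope_anti (ha : 0 < a) {u v u' v' : ℝ} (hu : 0 ≤ u) (hv : 0 ≤ v) (huu : u ≤ u') (hvv : v ≤ v') :
    slope a u' v' ≤ slope a u v := by
  have h1 := denom_pos a ha hu
  have h2 := denom_pos a ha hv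
  have h1' : 0 < a * u' + 1 := denom_pos a ha (le_trans hu huu)
  have h2' : 0 < a * v' + 1 := denom_pos a ha (le_trans hv hvv)
  have hD : 0 < (a * u + 1) * (a * v + 1) := mul_pos h1 h2
  have hD' : 0 < (a * u' + 1) * (a * v' + 1) := mul_pos h1' h2'
  rw [slope, slope, div_le_div_iff₀ hD' hD]
  have e1 : a * u + 1 ≤ a * u' + 1 := by nlinarith
  have e2 : a * v + 1 ≤ a * v' + 1 := by nlinarith
  have hDD : (a * u + 1) * (a * v + 1) ≤ (a * u' + 1) * (a * v' + 1) :=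
    mul_le_mul e1 e2 h2.le h1'.le
  exact mul_le_mul_of_nonneg_left hDD ha.le

/-- the interpolation lemma: on nodes, `fpen` is a nonneg combination of `min(·, node)` -/
lemma interp (ha : 0 < a) (K : ℕ) (t : ℕ → ℝ) (ht0 : t 0 = 0)
    (hmono : ∀ i j, i ≤ j → j ≤ K → t i ≤ t j) (hnn : ∀ j, j ≤ K → 0 ≤ t j) :
    ∃ w : ℕ → ℝ, (∀ k, k < K → 0 ≤ w k) ∧
      ∀ j, j ≤ K → fpen a (t j) = ∑ k ∈ Finset.range K, w k * min (t j) (t (k + 1)) := by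
  set s : ℕ → ℝ := fun k => if k < K then slope a (t k) (t (k + 1)) else 0 with hs
  refine ⟨fun k => s k - s (k + 1), ?_, ?_⟩
  · intro k hk
    have goal : 0 ≤ s k - s (k + 1) := by
      by_cases hk1 : k + 1 < K
      · have h1 : s k = slope a (t k) (t (k + 1)) := if_pos hk
        have h2 : s (k + 1) = slope a (t (k + 1)) (t (k + 2)) := if_pos hk1
        rw [h1, h2, sub_nonneg]
        exact slope_anti a ha (hnn k (by omega)) (hnn (k + 1) (by omega))
          (hmono k (k + 1) (by omega) (by omega)) (hmono (k + 1) (k + 2) (by omega) (by omega))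
      · have h2 : s (k + 1) = 0 := if_neg hk1
        have h1 : s k = slope a (t k) (t (k + 1)) := if_pos hk
        rw [h2, sub_zero, h1]
        exact slope_nonneg a ha (hnn k (by omega)) (hnn (k + 1) (by omega))
    exact goal
  · -- main identity
    have tel : ∀ N, ∑ k ∈ Finset.range N, (s k - s (k + 1)) = s 0 - s N := by
      intro N
      induction N with
      | zero => simp
      | succ N ih => rw [Finset.sum_range_succ, ih]; ring
    have tail_sum : ∀ j, j ≤ K → ∑ k ∈ Finset.Ico j K, (s k - s (k + 1)) = s j := by
      intro j hj
      have h := Finset.sum_Ico_eq_sub (fun k => s k - s (k + 1)) hj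
      have hsK : s K = 0 := if_neg (lt_irrefl K)
      rw [h, tel, tel, hsK]
      ring
    have split : ∀ j, j ≤ K →
        ∑ k ∈ Finset.range K, (s k - s (k + 1)) * min (t j) (t (k + 1))
        = ∑ k ∈ Finset.range j, (s k - s (k + 1)) * t (k + 1) + t j * s j := by
      intro j hj
      rw [Finset.range_eq_Ico, ← Finset.sum_Ico_consecutive _ (Nat.zero_le j) hj,
        ← Finset.range_eq_Ico]
      congr 1
      · refine Finset.sum_congr rfl fun k hk => ?_
        have hkj : k < j := Finset.mem_range.mp hk
        rw [min_eq_right (hmono (k + 1) j (by omega) hj)]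
      · have : ∀ k ∈ Finset.Ico j K, (s k - s (k + 1)) * min (t j) (t (k + 1))
            = (s k - s (k + 1)) * t j := by
          intro k hk
          have hjk := (Finset.mem_Ico.mp hk).1
          have hkK := (Finset.mem_Ico.mp hk).2
          rw [min_eq_left (hmono j (k + 1) (by omega) (by omega))]
        rw [Finset.sum_congr rfl this, ← Finset.sum_mul, tail_sum j hj]
        ring
    -- G j := ∑_{k<j} w_k t_{k+1} + t j * s j equals fpen (t j), by induction
    have main : ∀ j, j ≤ K →
        ∑ k ∈ Finset.range j, (s k - s (k + 1)) * t (k + 1) + t j * s j = fpen a (t j) := by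
      intro j
      induction j with
      | zero => intro _; simp [ht0, fpen_zero]
      | succ j ih =>
        intro hj1
        have hj : j ≤ K := by omega
        have hjK : j < K := by omega
        have hstep := ih hj
        rw [Finset.sum_range_succ]
        have hsj : s j = slope a (t j) (t (j + 1)) := if_pos hjK
        have hkey := fpen_sub a ha (t j) (t (j + 1)) (hnn j hj) (hnn (j + 1) (by omega))
        -- goal: prev_sum + w j t (j+1) + t (j+1) s (j+1) = fpen (t (j+1))
        have expand : (∑ k ∈ Finset.range j, (s k - s (k + 1)) * t (k + 1))
            + (s j - s (j + 1)) * t (j + 1) + t (j + 1) * s (j + 1)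
            = (∑ k ∈ Finset.range j, (s k - s (k + 1)) * t (k + 1) + t j * s j)
              + s j * (t (j + 1) - t j) := by ring
        rw [expand, hstep, hsj, ← hkey]
        ring
    intro j hj
    exact ((split j hj).trans (main j hj)).symm

end Interp

-- ============== final assembly ==============

theorem statement3' (m n : ℕ) (hmn : m ≤ n) (a : ℝ) (ha : 0 < a)
    (X Y : Matrix (Fin m) (Fin n) ℝ) :
    Pa a (X + Y) ≤ Pa a X + Pa a Y := by
  classical
  -- the finite set of relevant values
  set P : Finset ℝ := ((Finset.univ.image (sv X) ∪ Finset.univ.image (sv Y))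
      ∪ (Finset.univ.image (sv (X + Y)) ∪ {0})) with hP
  have hP_nonneg : ∀ p ∈ P, 0 ≤ p := by
    intro p hp
    rw [hP] at hp
    simp only [Finset.mem_union, Finset.mem_image, Finset.mem_singleton] at hp
    rcases hp with (⟨i, _, rfl⟩ | ⟨i, _, rfl⟩) | (⟨i, _, rfl⟩ | rfl)
    · exact sv_nonneg X i
    · exact sv_nonneg Y i
    · exact sv_nonneg (X + Y) i
    · exact le_refl 0

  have hP0 : (0:ℝ) ∈ P := by simp [hP]
  have hcard : 0 < P.card := Finset.card_pos.mpr ⟨0, hP0⟩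
  set o := P.orderIsoOfFin rfl with ho
  set t : ℕ → ℝ := fun j => (o ⟨min j (P.card - 1), by omega⟩ : ℝ) with hti
  have ht_mem : ∀ j, t j ∈ P := fun j => (o ⟨min j (P.card - 1), by omega⟩).2
  have hnn : ∀ j, j ≤ P.card - 1 → 0 ≤ t j := fun j _ => hP_nonneg _ (ht_mem j)
  have hmono : ∀ i j, i ≤ j → j ≤ P.card - 1 → t i ≤ t j := by
    intro i j hij _
    have : (⟨min i (P.card - 1), by omega⟩ : Fin P.card) ≤ ⟨min j (P.card - 1), by omega⟩ := by
      simp only [Fin.mk_le_mk]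
      omega
    exact Subtype.coe_le_coe.mpr (o.monotone this)
  have ht0 : t 0 = 0 := by
    have h1 : 0 ≤ t 0 := hP_nonneg _ (ht_mem 0)
    have h2 : t 0 ≤ 0 := by
      have hidx : (⟨min 0 (P.card - 1), by omega⟩ : Fin P.card) ≤ o.symm ⟨0, hP0⟩ := by
        rw [Fin.le_def]
        show min 0 (P.card - 1) ≤ ((o.symm ⟨0, hP0⟩ : Fin P.card) : ℕ)
        simp
      have := o.monotone hidx
      rw [OrderIso.apply_symm_apply] at this
      exact Subtype.coe_le_coe.mpr this
    linarith
  have hcover : ∀ p ∈ P, ∃ j, j ≤ P.card - 1 ∧ t j = p := by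
    intro p hp
    refine ⟨(o.symm ⟨p, hp⟩ : Fin P.card), by omega, ?_⟩
    have hfin : (⟨min ((o.symm ⟨p, hp⟩ : Fin P.card) : ℕ) (P.card - 1), by omega⟩ : Fin P.card)
        = o.symm ⟨p, hp⟩ := by
      have hlt := (o.symm ⟨p, hp⟩).isLt
      apply Fin.ext
      show min ((o.symm ⟨p, hp⟩ : Fin P.card) : ℕ) (P.card - 1)
          = ((o.symm ⟨p, hp⟩ : Fin P.card) : ℕ)
      omega
    rw [hti]
    simp only [hfin, OrderIso.apply_symm_apply]
  obtain ⟨w, hw, hrep⟩ := interp a ha (P.card - 1) t ht0 hmono hnn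
  have hfp : ∀ p ∈ P, fpen a p
      = ∑ k ∈ Finset.range (P.card - 1), w k * min p (t (k + 1)) := by
    intro p hp
    obtain ⟨j, hj, hjp⟩ := hcover p hp
    rw [← hjp]
    exact hrep j hj
  have key : ∀ Z : Matrix (Fin m) (Fin n) ℝ, (∀ i, sv Z i ∈ P) →
      Pa a Z = ∑ k ∈ Finset.range (P.card - 1), w k * Ksum (t (k + 1)) Z := by
    intro Z hZ
    have h1 : Pa a Z = ∑ i, fpen a (sv Z i) := by
      rw [Pa]
      exact Finset.sum_congr rfl fun i _ => rfl
    rw [h1]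
    rw [Finset.sum_congr rfl (fun i (_ : i ∈ Finset.univ) => hfp (sv Z i) (hZ i))]
    rw [Finset.sum_comm]
    refine Finset.sum_congr rfl fun k _ => ?_
    rw [Ksum, Finset.mul_sum]
  have hmemX : ∀ i, sv X i ∈ P := by
    intro i
    rw [hP]
    simp only [Finset.mem_union, Finset.mem_image]
    exact Or.inl (Or.inl ⟨i, Finset.mem_univ i, rfl⟩)
  have hmemY : ∀ i, sv Y i ∈ P := by
    intro i
    rw [hP]
    simp only [Finset.mem_union, Finset.mem_image]
    exact Or.inl (Or.inr ⟨i, Finset.mem_univ i, rfl⟩)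
  have hmemXY : ∀ i, sv (X + Y) i ∈ P := by
    intro i
    rw [hP]
    simp only [Finset.mem_union, Finset.mem_image]
    exact Or.inr (Or.inl ⟨i, Finset.mem_univ i, rfl⟩)
  rw [key (X + Y) hmemXY, key X hmemX, key Y hmemY, ← Finset.sum_add_distrib]
  refine Finset.sum_le_sum fun k hk => ?_
  have hwk : 0 ≤ w k := hw k (Finset.mem_range.mp hk)
  have hsk : 0 ≤ t (k + 1) := hP_nonneg _ (ht_mem (k + 1))
  rw [← mul_add]
  exact mul_le_mul_of_nonneg_left (ksum_subadd (t (k + 1)) hsk X Y) hwk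



end Rot

theorem statement3 (m n : ℕ) (hmn : m ≤ n) (a : ℝ) (ha : 0 < a)
    (X Y : Matrix (Fin m) (Fin n) ℝ) :
    Pa a (X + Y) ≤ Pa a X + Pa a Y := by
  exact Rot.statement3' m n hmn a ha X Y
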